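/- For any matrix D ∈ ℝ^{n×m} with nonzero columns, the spark satisfies σ(D) ≥ 1 + 1/μ(D), where μ(D) is the mutual coherence, i.e., the maximum over i≠j of |dᵢᵀdⱼ|/(‖dᵢ‖₂‖dⱼ‖₂). -/

import Mathlib

/-- The spark of a matrix: the smallest number of linearly dependent columns. -/
noncomputable def spark {n m : ℕ} (D : Matrix (Fin n) (Fin m) ℝ) : ℕ :=
  sInf {k | ∃ s : Finset (Fin m), s.card = k ∧
    ¬ LinearIndependent ℝ (fun j : {x // x ∈ s} => fun i => D i j.1)}

/-- The mutual coherence: maximal normalized correlation between distinct columns. -/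
noncomputable def mutualCoherence {n m : ℕ} (D : Matrix (Fin n) (Fin m) ℝ) : ℝ :=
  sSup {x | ∃ i j : Fin m, i ≠ j ∧
    x = |∑ t, D t i * D t j| /
      (Real.sqrt (∑ t, D t i ^ 2) * Real.sqrt (∑ t, D t j ^ 2))}

lemma aux_sum_sq_pos {n : ℕ} (f : Fin n → ℝ) (hf : f ≠ 0) : 0 < ∑ t, f t ^ 2 := by
  rcases Function.ne_iff.mp hf with ⟨t, ht⟩
  have ht' : f t ≠ 0 := ht
  calc (0:ℝ) < f t ^ 2 := (sq_nonneg _).lt_of_ne (by simpa using (pow_ne_zero 2 ht').symm)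
    _ ≤ ∑ t, f t ^ 2 :=
      Finset.single_le_sum (f := fun t => f t ^ 2) (fun i _ => sq_nonneg _) (Finset.mem_univ t)

lemma aux_coh {n m : ℕ} (D : Matrix (Fin n) (Fin m) ℝ)
    (hcols : ∀ j : Fin m, (fun i => D i j) ≠ 0) (i j : Fin m) (hij : i ≠ j) :
    |∑ t, D t i * D t j| ≤ mutualCoherence D *
      (Real.sqrt (∑ t, D t i ^ 2) * Real.sqrt (∑ t, D t j ^ 2)) := by
  have hpi : 0 < ∑ t, D t i ^ 2 := aux_sum_sq_pos _ (hcols i)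
  have hpj : 0 < ∑ t, D t j ^ 2 := aux_sum_sq_pos _ (hcols j)
  have hden : 0 < Real.sqrt (∑ t, D t i ^ 2) * Real.sqrt (∑ t, D t j ^ 2) :=
    mul_pos (Real.sqrt_pos.mpr hpi) (Real.sqrt_pos.mpr hpj)
  have hbdd : BddAbove {x | ∃ i j : Fin m, i ≠ j ∧
      x = |∑ t, D t i * D t j| /
        (Real.sqrt (∑ t, D t i ^ 2) * Real.sqrt (∑ t, D t j ^ 2))} := by
    refine ⟨1, ?_⟩
    rintro x ⟨a, b, hab, rfl⟩
    rcases le_or_gt (Real.sqrt (∑ t, D t a ^ 2) * Real.sqrt (∑ t, D t b ^ 2)) 0 with h | h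
    · exact le_trans (div_nonpos_of_nonneg_of_nonpos (abs_nonneg _) h) zero_le_one
    · rw [div_le_one h]
      have hcs := Finset.sum_mul_sq_le_sq_mul_sq Finset.univ (fun t => D t a) (fun t => D t b)
      calc |∑ t, D t a * D t b| = Real.sqrt ((∑ t, D t a * D t b) ^ 2) :=
            (Real.sqrt_sq_eq_abs _).symm
        _ ≤ Real.sqrt ((∑ t, D t a ^ 2) * ∑ t, D t b ^ 2) := Real.sqrt_le_sqrt hcs
        _ = _ := Real.sqrt_mul (Finset.sum_nonneg fun _ _ => sq_nonneg _) _
  have hmem : |∑ t, D t i * D t j| /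
      (Real.sqrt (∑ t, D t i ^ 2) * Real.sqrt (∑ t, D t j ^ 2)) ≤ mutualCoherence D :=
    le_csSup hbdd ⟨i, j, hij, rfl⟩
  calc |∑ t, D t i * D t j|
      = |∑ t, D t i * D t j| /
        (Real.sqrt (∑ t, D t i ^ 2) * Real.sqrt (∑ t, D t j ^ 2)) *
        (Real.sqrt (∑ t, D t i ^ 2) * Real.sqrt (∑ t, D t j ^ 2)) := by
        field_simp
    _ ≤ _ := mul_le_mul_of_nonneg_right hmem hden.le

theorem stmt1 {n m : ℕ} (D : Matrix (Fin n) (Fin m) ℝ)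
    (hcols : ∀ j : Fin m, (fun i => D i j) ≠ 0)
    (hdep : ∃ s : Finset (Fin m),
      ¬ LinearIndependent ℝ (fun j : {x // x ∈ s} => fun i => D i j.1))
    (hμ : 0 < mutualCoherence D) :
    1 + 1 / mutualCoherence D ≤ (spark D : ℝ) := by
  classical
  have hmem : spark D ∈ {k | ∃ s : Finset (Fin m), s.card = k ∧
      ¬ LinearIndependent ℝ (fun j : {x // x ∈ s} => fun i => D i j.1)} := by
    obtain ⟨s0, hs0⟩ := hdep
    exact Nat.sInf_mem ⟨s0.card, s0, rfl, hs0⟩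
  obtain ⟨s, hcard, hnli⟩ := hmem
  rw [Fintype.not_linearIndependent_iff] at hnli
  obtain ⟨g, hsum, j₀, hg0⟩ := hnli
  set N : Fin m → ℝ := fun j => Real.sqrt (∑ t, D t j ^ 2) with hNdef
  have hNpos : ∀ j, 0 < N j := fun j => Real.sqrt_pos.mpr (aux_sum_sq_pos _ (hcols j))
  have hNsq : ∀ j, N j * N j = ∑ t, D t j ^ 2 := fun j =>
    Real.mul_self_sqrt (Finset.sum_nonneg fun _ _ => sq_nonneg _)
  obtain ⟨i₀, -, hmax⟩ := Finset.exists_max_image (Finset.univ : Finset {x // x ∈ s})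
    (fun j => |g j| * N j.1) ⟨j₀, Finset.mem_univ _⟩
  have hmax' : ∀ j : {x // x ∈ s}, |g j| * N j.1 ≤ |g i₀| * N i₀.1 :=
    fun j => hmax j (Finset.mem_univ _)
  have hpos : 0 < |g i₀| * N i₀.1 :=
    lt_of_lt_of_le (mul_pos (abs_pos.mpr hg0) (hNpos _)) (hmax' j₀)
  -- inner product of the vanishing combination with column i₀
  have hkey : ∑ j : {x // x ∈ s}, g j * ∑ t, D t i₀.1 * D t j.1 = 0 := by
    have h1 : ∀ t, ∑ j : {x // x ∈ s}, g j * D t j.1 = 0 := by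
      intro t
      have := congrFun hsum t
      simpa using this
    calc ∑ j : {x // x ∈ s}, g j * ∑ t, D t i₀.1 * D t j.1
        = ∑ j : {x // x ∈ s}, ∑ t, g j * (D t i₀.1 * D t j.1) := by
          simp_rw [Finset.mul_sum]
      _ = ∑ t, ∑ j : {x // x ∈ s}, g j * (D t i₀.1 * D t j.1) := Finset.sum_comm
      _ = 0 := by
          refine Finset.sum_eq_zero fun t _ => ?_
          calc ∑ j : {x // x ∈ s}, g j * (D t i₀.1 * D t j.1)
              = D t i₀.1 * ∑ j : {x // x ∈ s}, g j * D t j.1 := by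
                rw [Finset.mul_sum]; exact Finset.sum_congr rfl fun j _ => by ring
            _ = 0 := by rw [h1 t, mul_zero]
  have hdiag : g i₀ * ∑ t, D t i₀.1 * D t i₀.1
      = -∑ j ∈ Finset.univ.erase i₀, g j * ∑ t, D t i₀.1 * D t j.1 := by
    have h := Finset.add_sum_erase Finset.univ
      (fun j : {x // x ∈ s} => g j * ∑ t, D t i₀.1 * D t j.1) (Finset.mem_univ i₀)
    rw [hkey] at h
    linarith
  have hk1 : 1 ≤ spark D := by
    rw [← hcard]
    exact Finset.card_pos.mpr ⟨i₀.1, i₀.2⟩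
  have hcard' : ((Finset.univ.erase i₀).card : ℝ) = (spark D : ℝ) - 1 := by
    rw [Finset.card_erase_of_mem (Finset.mem_univ _)]
    rw [Nat.cast_sub (by simpa [Fintype.card_coe, hcard] using hk1)]
    simp [Fintype.card_coe, hcard]
  have hdd : ∑ t, D t i₀.1 * D t i₀.1 = N i₀.1 * N i₀.1 := by
    rw [hNsq]; simp only [pow_two]
  have hchain : |g i₀| * (N i₀.1 * N i₀.1)
      ≤ mutualCoherence D * ((spark D : ℝ) - 1) * (|g i₀| * (N i₀.1 * N i₀.1)) := by
    calc |g i₀| * (N i₀.1 * N i₀.1)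
        = |g i₀ * ∑ t, D t i₀.1 * D t i₀.1| := by
          rw [abs_mul, hdd, abs_of_nonneg (mul_nonneg (hNpos _).le (hNpos _).le)]
      _ = |∑ j ∈ Finset.univ.erase i₀, g j * ∑ t, D t i₀.1 * D t j.1| := by
          rw [hdiag, abs_neg]
      _ ≤ ∑ j ∈ Finset.univ.erase i₀, |g j * ∑ t, D t i₀.1 * D t j.1| :=
          Finset.abs_sum_le_sum_abs _ _
      _ ≤ ∑ _j ∈ Finset.univ.erase i₀,
            mutualCoherence D * N i₀.1 * (|g i₀| * N i₀.1) := by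
          refine Finset.sum_le_sum fun j hj => ?_
          have hne : i₀.1 ≠ j.1 := fun h =>
            (Finset.ne_of_mem_erase hj) (Subtype.ext h.symm)
          have hc := aux_coh D hcols i₀.1 j.1 hne
          calc |g j * ∑ t, D t i₀.1 * D t j.1|
              = |g j| * |∑ t, D t i₀.1 * D t j.1| := abs_mul _ _
            _ ≤ |g j| * (mutualCoherence D * (N i₀.1 * N j.1)) :=
                mul_le_mul_of_nonneg_left hc (abs_nonneg _)
            _ = mutualCoherence D * N i₀.1 * (|g j| * N j.1) := by ring
            _ ≤ mutualCoherence D * N i₀.1 * (|g i₀| * N i₀.1) :=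
                mul_le_mul_of_nonneg_left (hmax' j)
                  (mul_nonneg hμ.le (hNpos _).le)
      _ = mutualCoherence D * ((spark D : ℝ) - 1) * (|g i₀| * (N i₀.1 * N i₀.1)) := by
          rw [Finset.sum_const, nsmul_eq_mul, hcard']
          ring
  have hA : 0 < |g i₀| * (N i₀.1 * N i₀.1) := by nlinarith [hpos, hNpos i₀.1]
  have h1 : 1 ≤ mutualCoherence D * ((spark D : ℝ) - 1) :=
    (le_mul_iff_one_le_left hA).mp hchain
  have h2 : 1 / mutualCoherence D ≤ (spark D : ℝ) - 1 := by
    rw [div_le_iff₀ hμ]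
    nlinarith
  linarith
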